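/- Let z, w and t_{i_1}, ..., t_{i_N} be pairwise distinct complex numbers. For a list I = (i_N, ..., i_1) set ζ_I(z) = (∏_{k=2}^{N} 1/(t_{i_k} - t_{i_{k-1}})) · 1/(t_{i_1} - z) and ζ_∅(z) = 1, and for a list J let J* denote J in reverse order. Then ((z - w)/(t_{i_N} - w)) · ζ_I(z) = ∑_{I = I_2 I_1} (-1)^{|I_2|} ζ_{I_1}(z) · ζ_{I_2*}(w), where the sum is over all decompositions of I as a concatenation of an initial segment I_2 and a final segment I_1 (including the empty ones). -/

import Mathlib

/-- `zeta [c_N,...,c_1] z = (∏_{k=2}^N 1/(c_k - c_{k-1})) · 1/(c_1 - z)`, `zeta [] z = 1`. -/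
noncomputable def zeta : List ℂ → ℂ → ℂ
  | [], _ => 1
  | [a], z => (a - z)⁻¹
  | a :: b :: rest, z => (a - b)⁻¹ * zeta (b :: rest) z

lemma zeta_append (L : List ℂ) (a w : ℂ) :
    zeta (L ++ [a]) w = zeta L a * (a - w)⁻¹ := by
  induction L with
  | nil => simp [zeta]
  | cons x rest ih =>
    cases rest with
    | nil => simp [zeta]
    | cons y rest' =>
      show zeta (x :: y :: (rest' ++ [a])) w = _
      rw [zeta]
      simp only [List.cons_append] at ih
      rw [ih]
      show _ = (x - y)⁻¹ * zeta (y :: rest') a * (a - w)⁻¹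
      ring

lemma aux_shuffle (z : ℂ) (t : List ℂ) : ∀ a w : ℂ,
    (z :: w :: a :: t).Pairwise (· ≠ ·) →
    ((z - w) / (a - w)) * zeta (a :: t) z =
      ∑ k ∈ Finset.range (t.length + 2),
        (-1 : ℂ) ^ k * zeta ((a :: t).drop k) z * zeta ((a :: t).take k).reverse w := by
  induction t with
  | nil =>
    intro a w h
    simp only [List.pairwise_cons, List.mem_cons, List.mem_singleton] at h
    have hza : z ≠ a := h.1 a (by simp)
    have hwa : w ≠ a := h.2.1 a (by simp)
    have h1 : a - z ≠ 0 := sub_ne_zero.mpr (Ne.symm hza)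
    have h2 : a - w ≠ 0 := sub_ne_zero.mpr (Ne.symm hwa)
    rw [show ([] : List ℂ).length + 2 = 2 from rfl, Finset.sum_range_succ,
      Finset.sum_range_one]
    show (z - w) / (a - w) * zeta [a] z =
      (-1 : ℂ) ^ 0 * zeta [a] z * zeta [] w + (-1 : ℂ) ^ 1 * zeta [] z * zeta [a] w
    simp only [zeta, pow_zero, pow_one]
    field_simp
    ring
  | cons b rest ih =>
    intro a w h
    have hsub : (z :: a :: b :: rest).Pairwise (· ≠ ·) :=
      h.sublist ((List.sublist_cons_self w _).cons₂ z)
    have key := ih b a hsub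
    simp only [List.pairwise_cons, List.mem_cons] at h
    have hwa : w ≠ a := by tauto
    have hab : a ≠ b := by tauto
    have h2 : a - w ≠ 0 := sub_ne_zero.mpr (Ne.symm hwa)
    have h3 : a - b ≠ 0 := sub_ne_zero.mpr hab
    have h4 : b - a ≠ 0 := sub_ne_zero.mpr (Ne.symm hab)
    rw [Finset.sum_range_succ']
    have hstep : ∀ k, (-1 : ℂ) ^ (k + 1) * zeta ((a :: b :: rest).drop (k + 1)) z *
        zeta ((a :: b :: rest).take (k + 1)).reverse w =
        -(a - w)⁻¹ * ((-1 : ℂ) ^ k * zeta ((b :: rest).drop k) z *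
          zeta ((b :: rest).take k).reverse a) := by
      intro k
      have : ((a :: b :: rest).take (k + 1)).reverse
          = ((b :: rest).take k).reverse ++ [a] := by
        simp [List.take_cons, List.reverse_cons]
      rw [this, zeta_append]
      show (-1 : ℂ) ^ (k + 1) * zeta ((b :: rest).drop k) z * _ = _
      rw [pow_succ]
      ring
    rw [Finset.sum_congr rfl (fun k _ => hstep k), ← Finset.mul_sum,
      show (b :: rest).length + 1 = rest.length + 2 by simp, ← key]
    have hz0 : ((a :: b :: rest).take 0).reverse = ([] : List ℂ) := rfl
    rw [hz0]
    show ((z - w) / (a - w)) * ((a - b)⁻¹ * zeta (b :: rest) z) =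
      -(a - w)⁻¹ * ((z - a) / (b - a) * zeta (b :: rest) z) +
        (-1 : ℂ) ^ 0 * ((a - b)⁻¹ * zeta (b :: rest) z) * zeta [] w
    simp only [pow_zero, zeta]
    field_simp
    ring

/-- Mixed shuffle identity: for pairwise distinct `z, w` and entries of the nonempty
list `I = (t_{i_N},...,t_{i_1})` (head = leftmost = `t_{i_N}`),
`((z-w)/(t_{i_N}-w)) ζ_I(z) = ∑_{I = I₂I₁} (-1)^{|I₂|} ζ_{I₁}(z) ζ_{I₂*}(w)`,
summing over all splittings of `I` into an initial segment `I₂` and final segment `I₁`. -/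
theorem mixed_shuffle (z w : ℂ) (I : List ℂ) (hI : I ≠ [])
    (h : (z :: w :: I).Pairwise (· ≠ ·)) :
    ((z - w) / (I.head hI - w)) * zeta I z =
      ∑ k ∈ Finset.range (I.length + 1),
        (-1 : ℂ) ^ k * zeta (I.drop k) z * zeta (I.take k).reverse w := by
  cases I with
  | nil => exact absurd rfl hI
  | cons a t => exact aux_shuffle z t a w h
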